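/- Let Ω be an n-dimensional vector space over F_q, let 0 ≤ r₁, r₂ ≤ n, and let t with max(0, r₂ - r₁) ≤ t ≤ min(r₂, n - r₁). The number of pairs (x₁, x₂) of subspaces with dim x₁ = r₁, dim x₂ = r₂ and dim(x₂/(x₂ ∩ x₁)) = t equals q^{t(r₁ - r₂ + t)} · [n choose t, r₂ - t, r₁ - r₂ + t, n - r₁ - t]_q. -/

import Mathlib

noncomputable def qPoch (q : ℚ) (k : ℕ) : ℚ := ∏ j ∈ Finset.range k, (1 - q ^ (j + 1))

/-- The q-multinomial coefficient `[n choose a,b,c,d]_q` (for `a+b+c+d = n`). -/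
noncomputable def qMultinom4 (q : ℚ) (n a b c d : ℕ) : ℚ :=
  qPoch q n / (qPoch q a * qPoch q b * qPoch q c * qPoch q d)

open Finset

/-- generic: if all fibers `{a // f a = b}` satisfy `card * A = B`, then `card α * A = card β * B`. -/
lemma nat_card_fiber_mul {α β : Type*} [Finite α] [Finite β] (f : α → β) (A B : ℕ)
    (h : ∀ b, Nat.card {a // f a = b} * A = B) : Nat.card α * A = Nat.card β * B := by
  classical
  have := Fintype.ofFinite α
  have := Fintype.ofFinite β
  rw [Nat.card_eq_fintype_card, Nat.card_eq_fintype_card]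
  calc Fintype.card α * A
      = (∑ b : β, Fintype.card {a // f a = b}) * A := by
        rw [← Fintype.card_sigma, Fintype.card_congr (Equiv.sigmaFiberEquiv f)]
    _ = ∑ b : β, Fintype.card {a // f a = b} * A := by rw [Finset.sum_mul]
    _ = ∑ _b : β, B := Finset.sum_congr rfl fun b _ => by
        rw [← Nat.card_eq_fintype_card]; exact h b
    _ = Fintype.card β * B := by rw [Finset.sum_const, smul_eq_mul, Finset.card_univ]

lemma nat_card_fiber_const {α β : Type*} [Finite α] [Finite β] (f : α → β) (c : ℕ)
    (h : ∀ b, Nat.card {a // f a = b} = c) : Nat.card α = Nat.card β * c := by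
  simpa using nat_card_fiber_mul f 1 c (fun b => by simpa using h b)

/-- the ℚ-product `∏_{i<k} (q^m - q^i)`. -/
noncomputable def FQ (q : ℚ) (m k : ℕ) : ℚ := ∏ i ∈ Finset.range k, (q ^ m - q ^ i)

lemma qPoch_ne_zero {q : ℚ} (hq : 2 ≤ q) (k : ℕ) : qPoch q k ≠ 0 := by
  unfold qPoch
  refine Finset.prod_ne_zero_iff.mpr fun j _ => ?_
  have h1 : (1:ℚ) < q ^ (j + 1) := one_lt_pow₀ (by linarith) (by omega)
  intro h; nlinarith

lemma qPoch_succ (q : ℚ) (k : ℕ) : qPoch q (k + 1) = qPoch q k * (1 - q ^ (k + 1)) := by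
  unfold qPoch; rw [Finset.prod_range_succ]

lemma FQ_succ (q : ℚ) (m k : ℕ) : FQ q m (k + 1) = FQ q m k * (q ^ m - q ^ k) := by
  unfold FQ; rw [Finset.prod_range_succ]

/-- key: `FQ q m k * P(m-k) = (-1)^k q^{k(k-1)/2} P m` for `k ≤ m`. -/
lemma FQ_mul_qPoch {q : ℚ} (hq : 2 ≤ q) {m k : ℕ} (hk : k ≤ m) :
    FQ q m k * qPoch q (m - k) = (-1) ^ k * q ^ (∑ i ∈ range k, i) * qPoch q m := by
  induction k with
  | zero => simp [FQ]
  | succ k ih =>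
      have hk' : k ≤ m := by omega
      have hmk : m - k = (m - k - 1) + 1 := by omega
      have hpos : m - k - 1 + 1 = m - k := by omega
      have hne : (1 - q ^ (m - k)) ≠ 0 := by
        have : (1:ℚ) < q ^ (m - k) := one_lt_pow₀ (by linarith) (by omega)
        intro h; nlinarith
      have key : FQ q m (k+1) * qPoch q (m - (k+1)) * (1 - q ^ (m - k))
          = ((-1) ^ (k+1) * q ^ (∑ i ∈ range (k+1), i) * qPoch q m) * (1 - q ^ (m - k)) := by
        have e1 : qPoch q (m - (k+1)) * (1 - q ^ (m - k)) = qPoch q (m - k) := by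
          have : m - (k+1) + 1 = m - k := by omega
          rw [← this, qPoch_succ, this]
        have e2 : (q ^ m - q ^ k) = -q ^ k * (1 - q ^ (m - k)) := by
          have : q ^ m = q ^ k * q ^ (m - k) := by
            rw [← pow_add]; congr 1; omega
          rw [this]; ring
        calc FQ q m (k+1) * qPoch q (m - (k+1)) * (1 - q ^ (m - k))
            = FQ q m (k+1) * qPoch q (m - k) := by rw [mul_assoc, e1]
          _ = FQ q m k * qPoch q (m - k) * (q ^ m - q ^ k) := by rw [FQ_succ]; ring
          _ = (-1) ^ k * q ^ (∑ i ∈ range k, i) * qPoch q m * (-q ^ k * (1 - q ^ (m-k))) := by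
              rw [ih hk', e2]
          _ = ((-1) ^ (k+1) * q ^ (∑ i ∈ range (k+1), i) * qPoch q m) * (1 - q ^ (m - k)) := by
              rw [Finset.sum_range_succ, pow_add, pow_succ]; ring
      exact mul_right_cancel₀ hne key


lemma FQ_ratio {q : ℚ} (hq : 2 ≤ q) {m k : ℕ} (hk : k ≤ m) :
    FQ q m k / FQ q k k = qPoch q m / (qPoch q (m - k) * qPoch q k) := by
  have f := FQ_mul_qPoch hq hk
  have g := FQ_mul_qPoch hq (le_refl k)
  rw [Nat.sub_self, show qPoch q 0 = 1 from by simp [qPoch], mul_one] at g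
  have hPm := qPoch_ne_zero hq m
  have hPk := qPoch_ne_zero hq k
  have hPmk := qPoch_ne_zero hq (m - k)
  have hs : ((-1:ℚ))^k * q^(∑ i ∈ range k, i) ≠ 0 :=
    mul_ne_zero (pow_ne_zero _ (by norm_num)) (pow_ne_zero _ (by linarith))
  rw [eq_div_of_mul_eq hPmk f, g, div_div,
    div_eq_div_iff (mul_ne_zero hPmk (mul_ne_zero hs hPk)) (mul_ne_zero hPmk hPk)]
  ring

open Module Submodule

lemma FQ_self_ne_zero {q : ℚ} (hq : 2 ≤ q) (k : ℕ) : FQ q k k ≠ 0 := by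
  unfold FQ
  refine Finset.prod_ne_zero_iff.mpr fun i hi => sub_ne_zero_of_ne (ne_of_gt ?_)
  exact pow_lt_pow_right₀ (by linarith) (Finset.mem_range.mp hi)

lemma cast_Aq {q k m : ℕ} (hq : 1 ≤ q) (hk : k ≤ m) :
    ((∏ i ∈ range k, (q^m - q^i) : ℕ) : ℚ) = FQ (q:ℚ) m k := by
  rw [Nat.cast_prod]
  unfold FQ
  refine Finset.prod_congr rfl fun i hi => ?_
  have hle : q^i ≤ q^m := Nat.pow_le_pow_right hq (by have := Finset.mem_range.mp hi; omega)
  rw [Nat.cast_sub hle]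
  push_cast
  ring



section Counting
variable {K : Type*} [Field K] [Fintype K]
variable {V : Type*} [AddCommGroup V] [Module K V] [FiniteDimensional K V]

/-- fibers of the span map over a fixed `k`-dimensional subspace. -/
lemma card_li_tuples_sub (x : Submodule K V) (k : ℕ) (hx : finrank K x = k) :
    Nat.card {u : Fin k → x // LinearIndependent K u}
      = ∏ i ∈ range k, (Fintype.card K ^ k - Fintype.card K ^ i) := by
  haveI : Finite V := Module.finite_of_finite K
  rw [card_linearIndependent (by rw [hx])]
  rw [← Fin.prod_univ_eq_prod_range (fun i => Fintype.card K ^ k - Fintype.card K ^ i) k]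
  exact Finset.prod_congr rfl fun i _ => by rw [hx]

lemma grass_count (k : ℕ) (hk : k ≤ finrank K V) :
    Nat.card {x : Submodule K V // finrank K x = k}
        * ∏ i ∈ range k, (Fintype.card K ^ k - Fintype.card K ^ i)
      = ∏ i ∈ range k, (Fintype.card K ^ finrank K V - Fintype.card K ^ i) := by
  haveI : Finite V := Module.finite_of_finite K
  haveI : Finite (Submodule K V) :=
    Finite.of_injective (fun x => (x : Set V)) SetLike.coe_injective
  have hcard := card_linearIndependent (K := K) (V := V) hk
  rw [← Fin.prod_univ_eq_prod_range
    (fun i => Fintype.card K ^ finrank K V - Fintype.card K ^ i) k, ← hcard]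
  symm
  apply nat_card_fiber_const
    (f := fun s : {s : Fin k → V // LinearIndependent K s} =>
      (⟨Submodule.span K (Set.range s.1), by
        rw [finrank_span_eq_card s.2, Fintype.card_fin]⟩ :
        {x : Submodule K V // finrank K x = k}))
  intro x
  rw [← card_li_tuples_sub x.1 k x.2]
  apply Nat.card_congr
  refine ⟨fun s => ?_, fun u => ?_, ?_, ?_⟩
  · have h : Submodule.span K (Set.range s.1.1) = x.1 := congrArg Subtype.val s.2
    refine ⟨fun i => ⟨s.1.1 i, h ▸ Submodule.subset_span (Set.mem_range_self i)⟩, ?_⟩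
    exact LinearIndependent.of_comp x.1.subtype s.1.2
  · refine ⟨⟨fun i => (u.1 i : V), u.2.map' x.1.subtype (Submodule.ker_subtype _)⟩, ?_⟩
    apply Subtype.ext
    apply Submodule.eq_of_le_of_finrank_eq
    · rw [Submodule.span_le]; rintro _ ⟨i, rfl⟩; exact (u.1 i).2
    · rw [finrank_span_eq_card (b := fun i => (u.1 i : V))
          (u.2.map' x.1.subtype (Submodule.ker_subtype _)), Fintype.card_fin, x.2]
  · intro s; apply Subtype.ext; apply Subtype.ext; rfl
  · intro u; apply Subtype.ext; funext i; apply Subtype.ext; rfl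


lemma finrank_map_mkQ_add (W x : Submodule K V) (h : W ≤ x) :
    finrank K (x.map W.mkQ) + finrank K W = finrank K x := by
  have hr : LinearMap.range (W.mkQ.comp x.subtype) = x.map W.mkQ := by
    rw [LinearMap.range_comp, Submodule.range_subtype]
  have hk : LinearMap.ker (W.mkQ.comp x.subtype) = W.comap x.subtype := by
    rw [LinearMap.ker_comp, Submodule.ker_mkQ]
  have hrn := LinearMap.finrank_range_add_finrank_ker (W.mkQ.comp x.subtype)
  rw [hr, hk] at hrn
  rw [← hrn]
  congr 1
  exact (Submodule.comapSubtypeEquivOfLe h).finrank_eq.symm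

lemma compl_count (U : Submodule K V) (d : ℕ) (hd : finrank K U + d ≤ finrank K V) :
    Nat.card {x : Submodule K V // finrank K x = d ∧ x ⊓ U = ⊥}
        * ∏ i ∈ range d, (Fintype.card K ^ d - Fintype.card K ^ i)
      = Fintype.card K ^ (finrank K U * d)
        * ∏ i ∈ range d, (Fintype.card K ^ (finrank K V - finrank K U) - Fintype.card K ^ i) := by
  classical
  haveI : Finite V := Module.finite_of_finite K
  haveI : Finite (Submodule K V) :=
    Finite.of_injective (fun x => (x : Set V)) SetLike.coe_injective
  have hq : finrank K (V ⧸ U) = finrank K V - finrank K U := by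
    have := Submodule.finrank_quotient_add_finrank U
    omega
  -- the intermediate set of tuples that are independent mod U
  have key : Nat.card {s : Fin d → V // LinearIndependent K (U.mkQ ∘ s)}
      = Fintype.card K ^ (finrank K U * d)
        * ∏ i ∈ range d, (Fintype.card K ^ (finrank K V - finrank K U) - Fintype.card K ^ i) := by
    have E : {s : Fin d → V // LinearIndependent K (U.mkQ ∘ s)} ≃
        ({sb : Fin d → (V ⧸ U) // LinearIndependent K sb} × (Fin d → U)) := by
      set g := Function.surjInv (Submodule.mkQ_surjective U) with hgdef
      have hg : ∀ y, U.mkQ (g y) = y := Function.surjInv_eq _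
      refine ⟨fun s => ⟨⟨U.mkQ ∘ s.1, s.2⟩, fun i => ⟨s.1 i - g (U.mkQ (s.1 i)), ?_⟩⟩,
        fun p => ⟨fun i => g (p.1.1 i) + (p.2 i : V), ?_⟩, ?_, ?_⟩
      · have hz : U.mkQ (s.1 i - g (U.mkQ (s.1 i))) = 0 := by rw [map_sub, hg, sub_self]
        rw [Submodule.mkQ_apply] at hz
        exact (Submodule.Quotient.mk_eq_zero U).mp hz
      · have : U.mkQ ∘ (fun i => g (p.1.1 i) + (p.2 i : V)) = p.1.1 := by
          funext i
          have h0 : U.mkQ (p.2 i : V) = 0 := by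
            rw [Submodule.mkQ_apply, Submodule.Quotient.mk_eq_zero]; exact (p.2 i).2
          simp [map_add, hg, h0]
        rw [this]; exact p.1.2
      · intro s; apply Subtype.ext; funext i; simp
      · rintro ⟨⟨sb, hsb⟩, u⟩
        have h0 : ∀ i, U.mkQ (u i : V) = 0 := fun i => by
          rw [Submodule.mkQ_apply, Submodule.Quotient.mk_eq_zero]; exact (u i).2
        refine Prod.ext ?_ ?_
        · apply Subtype.ext; funext i; simp [map_add, hg, h0 i]
        · funext i; apply Subtype.ext; simp [map_add, hg, h0 i]
    rw [Nat.card_congr E, Nat.card_prod]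
    haveI : Finite (V ⧸ U) := Quotient.finite _
    have h1 : Nat.card {sb : Fin d → (V ⧸ U) // LinearIndependent K sb}
        = ∏ i ∈ range d, (Fintype.card K ^ (finrank K V - finrank K U) - Fintype.card K ^ i) := by
      rw [card_linearIndependent (by omega)]
      rw [← Fin.prod_univ_eq_prod_range
        (fun i => Fintype.card K ^ (finrank K V - finrank K U) - Fintype.card K ^ i) d]
      exact Finset.prod_congr rfl fun i _ => by rw [hq]
    have h2 : Nat.card (Fin d → U) = Fintype.card K ^ (finrank K U * d) := by
      haveI : Fintype U := Fintype.ofFinite _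
      rw [Nat.card_eq_fintype_card, Fintype.card_fun, card_eq_pow_finrank (K := K) (V := U),
        Fintype.card_fin, ← pow_mul]
    rw [h1, h2, mul_comm]
  rw [← key]
  symm
  apply nat_card_fiber_const
    (f := fun s : {s : Fin d → V // LinearIndependent K (U.mkQ ∘ s)} =>
      (⟨Submodule.span K (Set.range s.1), ?_, ?_⟩ :
        {x : Submodule K V // finrank K x = d ∧ x ⊓ U = ⊥}))
  rotate_left
  · rw [finrank_span_eq_card (LinearIndependent.of_comp U.mkQ s.2), Fintype.card_fin]
  · rw [eq_bot_iff]
    intro v hv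
    obtain ⟨hv1, hv2⟩ := Submodule.mem_inf.mp hv
    obtain ⟨c, hc⟩ := (mem_span_range_iff_exists_fun K).mp hv1
    have h0 : U.mkQ v = 0 := by
      rw [Submodule.mkQ_apply, Submodule.Quotient.mk_eq_zero]; exact hv2
    have hsum : ∑ i, c i • (U.mkQ ∘ s.1) i = 0 := by
      calc ∑ i, c i • (U.mkQ ∘ s.1) i = U.mkQ (∑ i, c i • s.1 i) := by
            rw [map_sum]; exact Finset.sum_congr rfl fun i _ => by simp
        _ = 0 := by rw [hc, h0]
    have hz : ∀ i, c i = 0 := Fintype.linearIndependent_iff.mp s.2 c hsum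
    have : v = 0 := by rw [← hc]; simp [hz]
    simp [this]
  · intro x
    rw [← card_li_tuples_sub x.1 d x.2.1]
    apply Nat.card_congr
    have hker : LinearMap.ker (U.mkQ.comp x.1.subtype) = ⊥ := by
      rw [LinearMap.ker_comp, Submodule.ker_mkQ, eq_bot_iff]
      intro v hv
      have : (v : V) ∈ x.1 ⊓ U := Submodule.mem_inf.mpr ⟨v.2, hv⟩
      rw [x.2.2] at this
      simpa [Submodule.mem_bot] using Subtype.ext (Submodule.mem_bot K |>.mp this)
    refine ⟨fun s => ?_, fun u => ?_, ?_, ?_⟩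
    · have h : Submodule.span K (Set.range s.1.1) = x.1 := congrArg Subtype.val s.2
      refine ⟨fun i => ⟨s.1.1 i, h ▸ Submodule.subset_span (Set.mem_range_self i)⟩, ?_⟩
      exact LinearIndependent.of_comp x.1.subtype
        (LinearIndependent.of_comp U.mkQ s.1.2)
    · refine ⟨⟨fun i => (u.1 i : V), u.2.map' (U.mkQ.comp x.1.subtype) hker⟩, ?_⟩
      apply Subtype.ext
      apply Submodule.eq_of_le_of_finrank_eq
      · rw [Submodule.span_le]; rintro _ ⟨i, rfl⟩; exact (u.1 i).2
      · rw [finrank_span_eq_card (b := fun i => (u.1 i : V))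
          (u.2.map' x.1.subtype (Submodule.ker_subtype _)), Fintype.card_fin, x.2.1]
    · intro s; apply Subtype.ext; apply Subtype.ext; rfl
    · intro u; apply Subtype.ext; funext i; apply Subtype.ext; rfl

lemma card_fiber_x1 (x₂ s : Submodule K V) (hle : s ≤ x₂) (r₁ : ℕ)
    (hsr : finrank K s ≤ r₁) :
    Nat.card {x₁ : Submodule K V // finrank K x₁ = r₁ ∧ x₂ ⊓ x₁ = s}
      = Nat.card {y : Submodule K (V ⧸ s) //
          finrank K y = r₁ - finrank K s ∧ y ⊓ (x₂.map s.mkQ) = ⊥} := by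
  have hbot : s.map s.mkQ = ⊥ := by
    rw [eq_bot_iff, Submodule.map_le_iff_le_comap, Submodule.comap_bot, Submodule.ker_mkQ]
  have hsc : ∀ y : Submodule K (V ⧸ s), s ≤ Submodule.comap s.mkQ y := by
    intro y
    have h : s = Submodule.comap s.mkQ ⊥ := by rw [Submodule.comap_bot, Submodule.ker_mkQ]
    exact le_trans (le_of_eq h) (Submodule.comap_mono bot_le)
  apply Nat.card_congr
  refine ⟨fun x₁ => ?_, fun y => ?_, ?_, ?_⟩
  · have hsx : s ≤ x₁.1 := x₁.2.2.symm.trans_le inf_le_right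
    refine ⟨x₁.1.map s.mkQ, ?_, ?_⟩
    · have h := finrank_map_mkQ_add s x₁.1 hsx
      rw [x₁.2.1] at h; omega
    · have h1 : Submodule.comap s.mkQ (x₁.1.map s.mkQ ⊓ x₂.map s.mkQ) = s := by
        rw [Submodule.comap_inf, Submodule.comap_map_mkQ, Submodule.comap_map_mkQ,
          sup_eq_right.mpr hsx, sup_eq_right.mpr hle, inf_comm, x₁.2.2]
      have h2 := congrArg (Submodule.map s.mkQ) h1
      rw [Submodule.map_comap_eq_of_surjective (Submodule.mkQ_surjective s), hbot] at h2
      exact h2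
  · refine ⟨Submodule.comap s.mkQ y.1, ?_, ?_⟩
    · have h := finrank_map_mkQ_add s (Submodule.comap s.mkQ y.1) (hsc y.1)
      rw [Submodule.map_comap_eq_of_surjective (Submodule.mkQ_surjective s), y.2.1] at h
      omega
    · have h2 : Submodule.comap s.mkQ (y.1 ⊓ x₂.map s.mkQ) = s := by
        rw [y.2.2, Submodule.comap_bot, Submodule.ker_mkQ]
      rw [Submodule.comap_inf, Submodule.comap_map_mkQ, sup_eq_right.mpr hle] at h2
      exact (inf_comm x₂ (Submodule.comap s.mkQ y.1)).trans h2
  · intro x₁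
    have hsx : s ≤ x₁.1 := x₁.2.2.symm.trans_le inf_le_right
    apply Subtype.ext
    simp only
    rw [Submodule.comap_map_mkQ, sup_eq_right.mpr hsx]
  · intro y
    apply Subtype.ext
    simp only
    rw [Submodule.map_comap_eq_of_surjective (Submodule.mkQ_surjective s)]

lemma step_B (x₂ : Submodule K V) (n r₁ r₂ t : ℕ) (hn : finrank K V = n)
    (hx₂ : finrank K x₂ = r₂) (h2 : t ≤ r₂) (h1 : r₂ ≤ r₁ + t) (h3 : r₁ + t ≤ n) :
    Nat.card {x₁ : Submodule K V //
        finrank K x₁ = r₁ ∧ finrank K (x₂ ⊓ x₁ : Submodule K V) + t = r₂}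
      * ((∏ i ∈ range (r₁+t-r₂), (Fintype.card K ^ (r₁+t-r₂) - Fintype.card K ^ i))
        * (∏ i ∈ range (r₂-t), (Fintype.card K ^ (r₂-t) - Fintype.card K ^ i)))
    = (∏ i ∈ range (r₂-t), (Fintype.card K ^ r₂ - Fintype.card K ^ i))
      * (Fintype.card K ^ (t*(r₁+t-r₂))
        * ∏ i ∈ range (r₁+t-r₂), (Fintype.card K ^ (n-r₂) - Fintype.card K ^ i)) := by
  classical
  haveI : Finite V := Module.finite_of_finite K
  haveI : Finite (Submodule K V) :=
    Finite.of_injective (fun x => (x : Set V)) SetLike.coe_injective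
  -- the per-intersection fiber count
  have hfib : ∀ sx : {s : Submodule K V // s ≤ x₂ ∧ finrank K s = r₂ - t},
      Nat.card {x₁ : Submodule K V // finrank K x₁ = r₁ ∧ x₂ ⊓ x₁ = sx.1}
        * (∏ i ∈ range (r₁+t-r₂), (Fintype.card K ^ (r₁+t-r₂) - Fintype.card K ^ i))
      = Fintype.card K ^ (t*(r₁+t-r₂))
        * ∏ i ∈ range (r₁+t-r₂), (Fintype.card K ^ (n-r₂) - Fintype.card K ^ i) := by
    rintro ⟨s, hle, hfr⟩
    rw [card_fiber_x1 x₂ s hle r₁ (by rw [hfr]; omega)]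
    rw [hfr, show r₁ - (r₂ - t) = r₁ + t - r₂ from by omega]
    have hq1 : finrank K (V ⧸ s) = n - (r₂ - t) := by
      have h := Submodule.finrank_quotient_add_finrank s
      rw [hfr, hn] at h; omega
    have hU : finrank K (x₂.map s.mkQ) = t := by
      have h := finrank_map_mkQ_add s x₂ hle
      rw [hfr, hx₂] at h; omega
    have hc := compl_count (V := V ⧸ s) (x₂.map s.mkQ) (r₁+t-r₂) (by rw [hU, hq1]; omega)
    rw [hU, hq1, show n - (r₂-t) - t = n - r₂ from by omega] at hc
    exact hc
  -- the index count
  have hidx : Nat.card {s : Submodule K V // s ≤ x₂ ∧ finrank K s = r₂ - t}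
      * (∏ i ∈ range (r₂-t), (Fintype.card K ^ (r₂-t) - Fintype.card K ^ i))
      = ∏ i ∈ range (r₂-t), (Fintype.card K ^ r₂ - Fintype.card K ^ i) := by
    have hE : Nat.card {s : Submodule K V // s ≤ x₂ ∧ finrank K s = r₂ - t}
        = Nat.card {s' : Submodule K ↥x₂ // finrank K s' = r₂ - t} := by
      apply Nat.card_congr
      refine ⟨fun s => ⟨Submodule.comap x₂.subtype s.1, ?_⟩,
        fun s' => ⟨Submodule.map x₂.subtype s'.1, Submodule.map_subtype_le _ _, ?_⟩, ?_, ?_⟩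
      · rw [(Submodule.comapSubtypeEquivOfLe s.2.1).finrank_eq, s.2.2]
      · rw [← (Submodule.equivMapOfInjective x₂.subtype
          (Submodule.injective_subtype x₂) s'.1).finrank_eq, s'.2]
      · intro s
        apply Subtype.ext
        simp only
        rw [Submodule.map_comap_subtype, inf_eq_right.mpr s.2.1]
      · intro s'
        apply Subtype.ext
        simp only
        rw [Submodule.comap_map_eq_of_injective (Submodule.injective_subtype x₂)]
    rw [hE]
    have hg := grass_count (V := ↥x₂) (r₂ - t) (by rw [hx₂]; omega)
    rw [hx₂] at hg
    exact hg
  -- fiber the x₁'s over their intersection with x₂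
  have hmul := nat_card_fiber_mul
    (f := fun x₁ : {x₁ : Submodule K V //
        finrank K x₁ = r₁ ∧ finrank K (x₂ ⊓ x₁ : Submodule K V) + t = r₂} =>
      (⟨x₂ ⊓ x₁.1, inf_le_left, by have h := x₁.2.2; omega⟩ :
        {s : Submodule K V // s ≤ x₂ ∧ finrank K s = r₂ - t}))
    (∏ i ∈ range (r₁+t-r₂), (Fintype.card K ^ (r₁+t-r₂) - Fintype.card K ^ i))
    (Fintype.card K ^ (t*(r₁+t-r₂))
      * ∏ i ∈ range (r₁+t-r₂), (Fintype.card K ^ (n-r₂) - Fintype.card K ^ i))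
    (fun sx => by
      rw [← hfib sx]
      congr 1
      apply Nat.card_congr
      exact ⟨fun p => ⟨p.1.1, p.1.2.1, congrArg Subtype.val p.2⟩,
        fun z => ⟨⟨z.1, z.2.1, by rw [z.2.2, sx.2.2]; omega⟩, Subtype.ext z.2.2⟩,
        fun p => by apply Subtype.ext; apply Subtype.ext; rfl,
        fun z => by apply Subtype.ext; rfl⟩)
  calc Nat.card {x₁ : Submodule K V //
        finrank K x₁ = r₁ ∧ finrank K (x₂ ⊓ x₁ : Submodule K V) + t = r₂}
      * ((∏ i ∈ range (r₁+t-r₂), (Fintype.card K ^ (r₁+t-r₂) - Fintype.card K ^ i))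
        * (∏ i ∈ range (r₂-t), (Fintype.card K ^ (r₂-t) - Fintype.card K ^ i)))
      = (Nat.card {x₁ : Submodule K V //
          finrank K x₁ = r₁ ∧ finrank K (x₂ ⊓ x₁ : Submodule K V) + t = r₂}
        * (∏ i ∈ range (r₁+t-r₂), (Fintype.card K ^ (r₁+t-r₂) - Fintype.card K ^ i)))
        * (∏ i ∈ range (r₂-t), (Fintype.card K ^ (r₂-t) - Fintype.card K ^ i)) := by ring
    _ = (Nat.card {s : Submodule K V // s ≤ x₂ ∧ finrank K s = r₂ - t}
        * (Fintype.card K ^ (t*(r₁+t-r₂))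
          * ∏ i ∈ range (r₁+t-r₂), (Fintype.card K ^ (n-r₂) - Fintype.card K ^ i)))
        * (∏ i ∈ range (r₂-t), (Fintype.card K ^ (r₂-t) - Fintype.card K ^ i)) := by rw [hmul]
    _ = (Nat.card {s : Submodule K V // s ≤ x₂ ∧ finrank K s = r₂ - t}
        * (∏ i ∈ range (r₂-t), (Fintype.card K ^ (r₂-t) - Fintype.card K ^ i)))
        * (Fintype.card K ^ (t*(r₁+t-r₂))
          * ∏ i ∈ range (r₁+t-r₂), (Fintype.card K ^ (n-r₂) - Fintype.card K ^ i)) := by ring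
    _ = _ := by rw [hidx]

lemma master_count (n r₁ r₂ t : ℕ) (hn : finrank K V = n) (h2 : t ≤ r₂) (h1 : r₂ ≤ r₁ + t)
    (h3 : r₁ + t ≤ n) (hr₂ : r₂ ≤ n) :
    Nat.card {p : Submodule K V × Submodule K V //
        finrank K p.1 = r₁ ∧ finrank K p.2 = r₂ ∧
          finrank K (p.2 ⊓ p.1 : Submodule K V) + t = r₂}
      * ((∏ i ∈ range r₂, (Fintype.card K ^ r₂ - Fintype.card K ^ i))
        * ((∏ i ∈ range (r₂-t), (Fintype.card K ^ (r₂-t) - Fintype.card K ^ i))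
          * (∏ i ∈ range (r₁+t-r₂), (Fintype.card K ^ (r₁+t-r₂) - Fintype.card K ^ i))))
    = (∏ i ∈ range r₂, (Fintype.card K ^ n - Fintype.card K ^ i))
      * ((∏ i ∈ range (r₂-t), (Fintype.card K ^ r₂ - Fintype.card K ^ i))
        * (Fintype.card K ^ (t*(r₁+t-r₂))
          * ∏ i ∈ range (r₁+t-r₂), (Fintype.card K ^ (n-r₂) - Fintype.card K ^ i))) := by
  classical
  haveI : Finite V := Module.finite_of_finite K
  haveI : Finite (Submodule K V) :=
    Finite.of_injective (fun x => (x : Set V)) SetLike.coe_injective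
  have htop := nat_card_fiber_mul
    (f := fun p : {p : Submodule K V × Submodule K V //
        finrank K p.1 = r₁ ∧ finrank K p.2 = r₂ ∧
          finrank K (p.2 ⊓ p.1 : Submodule K V) + t = r₂} =>
      (⟨p.1.2, p.2.2.1⟩ : {x₂ : Submodule K V // finrank K x₂ = r₂}))
    ((∏ i ∈ range (r₁+t-r₂), (Fintype.card K ^ (r₁+t-r₂) - Fintype.card K ^ i))
      * (∏ i ∈ range (r₂-t), (Fintype.card K ^ (r₂-t) - Fintype.card K ^ i)))
    ((∏ i ∈ range (r₂-t), (Fintype.card K ^ r₂ - Fintype.card K ^ i))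
      * (Fintype.card K ^ (t*(r₁+t-r₂))
        * ∏ i ∈ range (r₁+t-r₂), (Fintype.card K ^ (n-r₂) - Fintype.card K ^ i)))
    (fun xx => by
      rw [← step_B xx.1 n r₁ r₂ t hn xx.2 h2 h1 h3]
      congr 1
      apply Nat.card_congr
      exact ⟨fun pp => ⟨pp.1.1.1, pp.1.2.1, by
          have h := congrArg Subtype.val pp.2
          simp only at h
          rw [← h]; exact pp.1.2.2.2⟩,
        fun z => ⟨⟨(z.1, xx.1), z.2.1, xx.2, z.2.2⟩, Subtype.ext rfl⟩,
        fun pp => by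
          apply Subtype.ext; apply Subtype.ext
          have h := congrArg Subtype.val pp.2
          simp only at h
          exact Prod.ext rfl h.symm,
        fun z => by apply Subtype.ext; rfl⟩)
  have hg := grass_count (V := V) r₂ (by rw [hn]; exact hr₂)
  rw [hn] at hg
  calc Nat.card {p : Submodule K V × Submodule K V //
        finrank K p.1 = r₁ ∧ finrank K p.2 = r₂ ∧
          finrank K (p.2 ⊓ p.1 : Submodule K V) + t = r₂}
      * ((∏ i ∈ range r₂, (Fintype.card K ^ r₂ - Fintype.card K ^ i))
        * ((∏ i ∈ range (r₂-t), (Fintype.card K ^ (r₂-t) - Fintype.card K ^ i))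
          * (∏ i ∈ range (r₁+t-r₂), (Fintype.card K ^ (r₁+t-r₂) - Fintype.card K ^ i))))
      = (Nat.card {p : Submodule K V × Submodule K V //
          finrank K p.1 = r₁ ∧ finrank K p.2 = r₂ ∧
            finrank K (p.2 ⊓ p.1 : Submodule K V) + t = r₂}
        * ((∏ i ∈ range (r₁+t-r₂), (Fintype.card K ^ (r₁+t-r₂) - Fintype.card K ^ i))
          * (∏ i ∈ range (r₂-t), (Fintype.card K ^ (r₂-t) - Fintype.card K ^ i))))
        * (∏ i ∈ range r₂, (Fintype.card K ^ r₂ - Fintype.card K ^ i)) := by ring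
    _ = (Nat.card {x₂ : Submodule K V // finrank K x₂ = r₂}
        * ((∏ i ∈ range (r₂-t), (Fintype.card K ^ r₂ - Fintype.card K ^ i))
          * (Fintype.card K ^ (t*(r₁+t-r₂))
            * ∏ i ∈ range (r₁+t-r₂), (Fintype.card K ^ (n-r₂) - Fintype.card K ^ i))))
        * (∏ i ∈ range r₂, (Fintype.card K ^ r₂ - Fintype.card K ^ i)) := by rw [htop]
    _ = (Nat.card {x₂ : Submodule K V // finrank K x₂ = r₂}
        * (∏ i ∈ range r₂, (Fintype.card K ^ r₂ - Fintype.card K ^ i)))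
        * ((∏ i ∈ range (r₂-t), (Fintype.card K ^ r₂ - Fintype.card K ^ i))
          * (Fintype.card K ^ (t*(r₁+t-r₂))
            * ∏ i ∈ range (r₁+t-r₂), (Fintype.card K ^ (n-r₂) - Fintype.card K ^ i))) := by ring
    _ = _ := by rw [hg]

end Counting



theorem card_pairs_at_distance (q n r₁ r₂ t : ℕ) (K : Type*) [Field K] [Fintype K]
    (hq : Fintype.card K = q)
    (Ω : Type*) [AddCommGroup Ω] [Module K Ω] [FiniteDimensional K Ω]
    (hn : Module.finrank K Ω = n) (hr₁ : r₁ ≤ n) (hr₂ : r₂ ≤ n)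
    (htlo : max 0 (r₂ - r₁) ≤ t) (hthi : t ≤ min r₂ (n - r₁)) :
    (Nat.card {p : Submodule K Ω × Submodule K Ω //
        Module.finrank K p.1 = r₁ ∧ Module.finrank K p.2 = r₂ ∧
        Module.finrank K (p.2 ⊓ p.1 : Submodule K Ω) + t = r₂} : ℚ) =
      (q : ℚ) ^ (t * (r₁ + t - r₂)) *
        qMultinom4 (q : ℚ) n t (r₂ - t) (r₁ + t - r₂) (n - r₁ - t) := by
  subst hq
  subst hn
  set n := finrank K Ω with hn
  set q := Fintype.card K with hqd
  have hq2 : 2 ≤ q := Fintype.one_lt_card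
  have h2 : t ≤ r₂ := le_trans hthi (min_le_left _ _)
  have h4 : t ≤ n - r₁ := le_trans hthi (min_le_right _ _)
  have h1 : r₂ ≤ r₁ + t := by
    have := le_trans (le_max_right 0 (r₂ - r₁)) htlo
    omega
  have h3 : r₁ + t ≤ n := by omega
  have hM := master_count (K := K) (V := Ω) n r₁ r₂ t hn.symm h2 h1 h3 hr₂
  have hc := congrArg (fun x : ℕ => (x : ℚ)) hM
  simp only [Nat.cast_mul, Nat.cast_pow] at hc
  rw [cast_Aq (by omega) (le_refl r₂), cast_Aq (by omega) (le_refl (r₂ - t)),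
    cast_Aq (by omega) (le_refl (r₁ + t - r₂)), cast_Aq (by omega) hr₂,
    cast_Aq (by omega) (show r₂ - t ≤ r₂ by omega),
    cast_Aq (by omega) (show r₁ + t - r₂ ≤ n - r₂ by omega)] at hc
  have hqq2 : (2:ℚ) ≤ (q:ℚ) := by exact_mod_cast hq2
  have hAne : FQ (q:ℚ) r₂ r₂ * (FQ (q:ℚ) (r₂-t) (r₂-t) * FQ (q:ℚ) (r₁+t-r₂) (r₁+t-r₂)) ≠ 0 :=
    mul_ne_zero (FQ_self_ne_zero hqq2 _)
      (mul_ne_zero (FQ_self_ne_zero hqq2 _) (FQ_self_ne_zero hqq2 _))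
  rw [eq_div_of_mul_eq hAne hc]
  have hPne : ∀ j, qPoch (q:ℚ) j ≠ 0 := qPoch_ne_zero hqq2
  have hFne : ∀ k : ℕ, FQ (q:ℚ) k k ≠ 0 := FQ_self_ne_zero hqq2
  have r1 := FQ_ratio hqq2 hr₂
  have r2 := FQ_ratio hqq2 (show r₂ - t ≤ r₂ by omega)
  rw [show r₂ - (r₂ - t) = t from by omega] at r2
  have r3 := FQ_ratio hqq2 (show r₁ + t - r₂ ≤ n - r₂ by omega)
  rw [show n - r₂ - (r₁ + t - r₂) = n - r₁ - t from by omega] at r3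
  have e1 : FQ (q:ℚ) n r₂
      = qPoch (q:ℚ) n / (qPoch (q:ℚ) (n - r₂) * qPoch (q:ℚ) r₂) * FQ (q:ℚ) r₂ r₂ := by
    rw [← r1, div_mul_cancel₀ _ (hFne r₂)]
  have e2 : FQ (q:ℚ) r₂ (r₂ - t)
      = qPoch (q:ℚ) r₂ / (qPoch (q:ℚ) t * qPoch (q:ℚ) (r₂ - t)) * FQ (q:ℚ) (r₂ - t) (r₂ - t) := by
    rw [← r2, div_mul_cancel₀ _ (hFne (r₂ - t))]
  have e3 : FQ (q:ℚ) (n - r₂) (r₁ + t - r₂)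
      = qPoch (q:ℚ) (n - r₂) / (qPoch (q:ℚ) (n - r₁ - t) * qPoch (q:ℚ) (r₁ + t - r₂))
        * FQ (q:ℚ) (r₁ + t - r₂) (r₁ + t - r₂) := by
    rw [← r3, div_mul_cancel₀ _ (hFne (r₁ + t - r₂))]
  rw [e1, e2, e3]
  unfold qMultinom4
  have hP1 := hPne n
  have hP2 := hPne (n - r₂)
  have hP3 := hPne r₂
  have hP4 := hPne t
  have hP5 := hPne (r₂ - t)
  have hP6 := hPne (n - r₁ - t)
  have hP7 := hPne (r₁ + t - r₂)
  have hF1 := hFne r₂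
  have hF2 := hFne (r₂ - t)
  have hF3 := hFne (r₁ + t - r₂)
  field_simp
  ring
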